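/- The integral over [0,1] of the two-point Hermite interpolant H_{m,n}(s) equals ((m+1)!/(m+n+2)!) Σ_{j=0}^{m} ((n+m-j+1)! / ((j+1)(m-j)!)) p_j + ((n+1)!/(m+n+2)!) Σ_{j=0}^{n} ((n+m-j+1)! / ((j+1)(n-j)!)) (-1)^j q_j. -/

import Mathlib

lemma beta_nat : ∀ (b a : ℕ), ∫ x in (0:ℝ)..1, x ^ a * (1 - x) ^ b
    = (a.factorial : ℝ) * b.factorial / (a + b + 1).factorial := by
  intro b
  induction b with
  | zero =>
    intro a
    have : ((a.factorial : ℝ)) ≠ 0 := Nat.cast_ne_zero.2 (Nat.factorial_ne_zero _)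
    simp [Nat.factorial]
    field_simp
  | succ b ih =>
    intro a
    have h1 : (∫ x in (0:ℝ)..1, x ^ a * (1 - x) ^ (b + 1))
        = (∫ x in (0:ℝ)..1, x ^ a * (1 - x) ^ b) - ∫ x in (0:ℝ)..1, x ^ (a+1) * (1 - x) ^ b := by
      rw [← intervalIntegral.integral_sub
        ((Continuous.intervalIntegrable (by fun_prop) _ _))
        ((Continuous.intervalIntegrable (by fun_prop) _ _))]
      apply intervalIntegral.integral_congr
      intro x _
      ring
    rw [h1, ih, ih]
    have e1 : a + (b + 1) + 1 = (a + b + 1) + 1 := by omega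
    have e2 : a + 1 + b + 1 = (a + b + 1) + 1 := by omega
    rw [e1, e2, Nat.factorial_succ (a + b + 1), Nat.factorial_succ a, Nat.factorial_succ b,
      Nat.cast_mul, Nat.cast_mul, Nat.cast_mul]
    have h2 : ((a+b+1).factorial : ℝ) ≠ 0 := Nat.cast_ne_zero.2 (Nat.factorial_ne_zero _)
    have h3 : ((a+b+1 : ℕ) : ℝ) + 1 ≠ 0 := by positivity
    set A := (a.factorial : ℝ); set B := (b.factorial : ℝ); set C := ((a+b+1).factorial : ℝ)
    have e3 : ((a+b+1 : ℕ) : ℝ) = (a:ℝ) + b + 1 := by push_cast; ring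
    have e4 : ((a+1 : ℕ) : ℝ) = (a:ℝ) + 1 := by push_cast; ring
    have e5 : ((b+1 : ℕ) : ℝ) = (b:ℝ) + 1 := by push_cast; ring
    rw [e3, e4, e5] at *
    field_simp
    push_cast; ring


lemma key_sum (ν j : ℕ) : ∀ t : ℕ,
    ∑ k ∈ Finset.range (t + 1), ((ν + k).choose k : ℝ)
        * ((k + j).factorial * (ν + 1).factorial / (k + j + ν + 2).factorial)
    = ((j + t + 1).factorial : ℝ) * (ν + t + 1).factorial
        / (((j : ℝ) + 1) * t.factorial * (j + t + ν + 2).factorial) := by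
  have fne : ∀ a : ℕ, ((a.factorial : ℝ)) ≠ 0 := fun a => Nat.cast_ne_zero.2 (Nat.factorial_ne_zero _)
  intro t
  induction t with
  | zero =>
    simp only [Finset.sum_range_one, Nat.choose_zero_right, Nat.cast_one, one_mul,
      Nat.add_zero, Nat.zero_add, Nat.factorial_zero, Nat.cast_one]
    rw [Nat.factorial_succ j, Nat.cast_mul]
    have h3 : ((j:ℝ)) + 1 ≠ 0 := by positivity
    push_cast
    field_simp
  | succ t ih =>
    rw [Finset.sum_range_succ, ih]
    have hc : ((ν + (t+1)).choose (t+1) : ℝ)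
        = ((ν + t + 1).factorial : ℝ) / ((t+1).factorial * ν.factorial) := by
      rw [Nat.cast_choose ℝ (by omega : t + 1 ≤ ν + (t+1))]
      have e : ν + (t+1) - (t+1) = ν := by omega
      have e' : ν + (t+1) = ν + t + 1 := by omega
      rw [e, e']
    rw [hc]
    have e1 : t + 1 + j = (j + t) + 1 := by omega
    rw [e1]
    have e2 : j + t + 1 + ν + 2 = (j + t + ν + 2) + 1 := by omega
    have e3 : j + (t+1) + 1 = (j + t + 1) + 1 := by omega
    have e4 : ν + (t+1) + 1 = (ν + t + 1) + 1 := by omega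
    have e5 : j + (t+1) + ν + 2 = (j + t + ν + 2) + 1 := by omega
    rw [e2, e3, e4, e5, Nat.factorial_succ (j+t+ν+2),
      Nat.factorial_succ (j+t+1), Nat.factorial_succ (ν+t+1),
      Nat.factorial_succ t, Nat.factorial_succ ν, Nat.factorial_succ (j+t)]
    push_cast
    have h1 : ((j:ℝ)) + 1 ≠ 0 := by positivity
    have h2 : ((t:ℝ)) + 1 ≠ 0 := by positivity
    have h3 : ((j:ℝ) + t + ν + 2) + 1 ≠ 0 := by positivity
    have h4 : ((j:ℝ) + t + ν) + 2 ≠ 0 := by positivity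
    field_simp
    ring

lemma int1 (ν j t : ℕ) :
    ∫ s in (0:ℝ)..1, ∑ k ∈ Finset.range (t + 1),
        ((ν + k).choose k : ℝ) * s ^ (k + j) * (1 - s) ^ (ν + 1)
    = ((j + t + 1).factorial : ℝ) * (ν + t + 1).factorial
        / (((j : ℝ) + 1) * t.factorial * (j + t + ν + 2).factorial) := by
  rw [intervalIntegral.integral_finset_sum (fun k _ =>
    Continuous.intervalIntegrable (by fun_prop) _ _)]
  rw [← key_sum ν j t]
  refine Finset.sum_congr rfl fun k _ => ?_
  simp only [mul_assoc]
  rw [intervalIntegral.integral_const_mul, beta_nat]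
  have e : k + j + (ν + 1) + 1 = k + j + ν + 2 := by omega
  rw [e]

lemma int2 (ν j t : ℕ) :
    ∫ s in (0:ℝ)..1, ∑ k ∈ Finset.range (t + 1),
        ((ν + k).choose k : ℝ) * s ^ (ν + 1) * (1 - s) ^ (k + j)
    = ((j + t + 1).factorial : ℝ) * (ν + t + 1).factorial
        / (((j : ℝ) + 1) * t.factorial * (j + t + ν + 2).factorial) := by
  rw [intervalIntegral.integral_finset_sum (fun k _ =>
    Continuous.intervalIntegrable (by fun_prop) _ _)]
  rw [← key_sum ν j t]
  refine Finset.sum_congr rfl fun k _ => ?_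
  simp only [mul_assoc]
  rw [intervalIntegral.integral_const_mul, beta_nat]
  have e : ν + 1 + (k + j) + 1 = k + j + ν + 2 := by omega
  rw [e, mul_comm ((ν+1).factorial : ℝ)]

noncomputable def blend (m n : ℕ) (p q : ℕ → ℝ) (s : ℝ) : ℝ :=
  (∑ j ∈ Finset.range (m + 1),
      (∑ k ∈ Finset.range (m - j + 1),
          ((n + k).choose k : ℝ) * s ^ (k + j) * (1 - s) ^ (n + 1)) * p j)
  + ∑ j ∈ Finset.range (n + 1),
      (∑ k ∈ Finset.range (n - j + 1),
          ((m + k).choose k : ℝ) * s ^ (m + 1) * (1 - s) ^ (k + j)) * (-1 : ℝ) ^ j * q j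

theorem integral_blend (m n : ℕ) (p q : ℕ → ℝ) :
    ∫ s in (0 : ℝ)..1, blend m n p q s
      = ((m + 1).factorial : ℝ) / ((m + n + 2).factorial : ℝ)
          * ∑ j ∈ Finset.range (m + 1),
              ((n + m - j + 1).factorial : ℝ) / ((j + 1 : ℝ) * ((m - j).factorial : ℝ)) * p j
        + ((n + 1).factorial : ℝ) / ((m + n + 2).factorial : ℝ)
          * ∑ j ∈ Finset.range (n + 1),
              ((n + m - j + 1).factorial : ℝ) / ((j + 1 : ℝ) * ((n - j).factorial : ℝ))
                * (-1 : ℝ) ^ j * q j := by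
  have fne : ∀ a : ℕ, ((a.factorial : ℝ)) ≠ 0 :=
    fun a => Nat.cast_ne_zero.2 (Nat.factorial_ne_zero _)
  unfold blend
  rw [intervalIntegral.integral_add
    (Continuous.intervalIntegrable (by fun_prop) _ _)
    (Continuous.intervalIntegrable (by fun_prop) _ _),
    intervalIntegral.integral_finset_sum (fun j _ =>
      Continuous.intervalIntegrable (by fun_prop) _ _),
    intervalIntegral.integral_finset_sum (fun j _ =>
      Continuous.intervalIntegrable (by fun_prop) _ _)]
  congr 1
  · rw [Finset.mul_sum]
    refine Finset.sum_congr rfl fun j hj => ?_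
    have hjm : j ≤ m := by
      have := Finset.mem_range.1 hj; omega
    rw [intervalIntegral.integral_mul_const, int1 n j (m - j)]
    have e1 : j + (m - j) + 1 = m + 1 := by omega
    have e2 : n + (m - j) + 1 = n + m - j + 1 := by omega
    have e3 : j + (m - j) + n + 2 = m + n + 2 := by omega
    rw [e1, e2, e3]
    have h1 : ((j:ℝ)) + 1 ≠ 0 := by positivity
    field_simp
  · rw [Finset.mul_sum]
    refine Finset.sum_congr rfl fun j hj => ?_
    have hjn : j ≤ n := by
      have := Finset.mem_range.1 hj; omega
    rw [intervalIntegral.integral_mul_const, intervalIntegral.integral_mul_const, int2 m j (n - j)]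
    have e1 : j + (n - j) + 1 = n + 1 := by omega
    have e2 : m + (n - j) + 1 = n + m - j + 1 := by omega
    have e3 : j + (n - j) + m + 2 = m + n + 2 := by omega
    rw [e1, e2, e3]
    have h1 : ((j:ℝ)) + 1 ≠ 0 := by positivity
    field_simp
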